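/- Fix integers m ≥ 2, n ≥ 1, k = ⌊n/2⌋ + 1. Define V_0 = {α ∈ (ℤ/m)^n : n_i(α) ≤ k ∀ 1 ≤ i ≤ m-1} and V_j = {α : n_j(α) ≥ k-1} for 1 ≤ j ≤ m-1. Then the graph on (ℤ/m)^n whose edge set is the union of the cliques on V_0, ..., V_{m-1} is chordal. -/

import Mathlib

open Finset SimpleGraph

private lemma chordal_aux_supp_getElem? {V : Type*} {G : SimpleGraph V} {u v : V}
    (w : G.Walk u v) : ∀ i : ℕ, i ≤ w.length → w.support[i]? = some (w.getVert i) := by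
  induction w with
  | nil => intro i hi; simp at hi; subst hi; simp
  | cons h p ih =>
    intro i hi
    cases i with
    | zero => simp
    | succ j =>
      rw [Walk.support_cons]
      simp only [List.getElem?_cons_succ, Walk.getVert_cons_succ]
      exact ih j (by simpa using hi)

private lemma chordal_aux_cycle_getVert_ne {V : Type*} {G : SimpleGraph V} {v : V}
    {c : G.Walk v v} (hc : c.IsCycle) {i j : ℕ}
    (hij : i < j) (hj : j ≤ c.length) (hne : ¬(i = 0 ∧ j = c.length)) :
    c.getVert i ≠ c.getVert j := by
  have hnd : c.support.tail.Nodup := hc.2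
  have htl : c.support.tail.length = c.length := by
    have h := Walk.length_support c
    have : c.support.tail.length + 1 = c.support.length := by
      rw [c.support_eq_cons]; simp
    omega
  have key : ∀ t : ℕ, t + 1 ≤ c.length → c.support.tail[t]? = some (c.getVert (t + 1)) := by
    intro t ht
    have := chordal_aux_supp_getElem? c (t + 1) ht
    rwa [c.support_eq_cons, List.getElem?_cons_succ] at this
  intro heq
  rcases Nat.eq_zero_or_pos i with hi0 | hipos
  · subst hi0
    have hjL : j < c.length := by omega
    have h1 : c.support.tail[j - 1]? = some (c.getVert j) := by
      have := key (j - 1) (by omega); rwa [Nat.sub_add_cancel (by omega)] at this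
    have h2 : c.support.tail[c.length - 1]? = some (c.getVert c.length) := by
      have := key (c.length - 1) (by omega)
      rwa [Nat.sub_add_cancel (by omega)] at this
    rw [c.getVert_length] at h2
    have hv : c.getVert j = v := by rw [← heq, c.getVert_zero]
    rw [hv, ← h2] at h1
    have := (List.getElem?_inj (by omega) hnd).mp h1
    omega
  · have h1 : c.support.tail[i - 1]? = some (c.getVert i) := by
      have := key (i - 1) (by omega); rwa [Nat.sub_add_cancel (by omega)] at this
    have h2 : c.support.tail[j - 1]? = some (c.getVert j) := by
      have := key (j - 1) (by omega); rwa [Nat.sub_add_cancel (by omega)] at this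
    rw [heq, ← h2] at h1
    have := (List.getElem?_inj (by omega) hnd).mp h1
    omega

private lemma chordal_aux_mem_edges_exists {V : Type*} {G : SimpleGraph V} {u v : V}
    (w : G.Walk u v) {e : Sym2 V} (he : e ∈ w.edges) :
    ∃ i < w.length, e = s(w.getVert i, w.getVert (i + 1)) := by
  induction w with
  | nil => simp at he
  | cons h p ih =>
    rw [Walk.edges_cons, List.mem_cons] at he
    rcases he with he | he
    · exact ⟨0, by simp, by simpa [Walk.getVert_cons_succ] using he⟩
    · obtain ⟨i, hi, hei⟩ := ih he
      exact ⟨i + 1, by simp [Walk.length_cons]; omega,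
        by simpa [Walk.getVert_cons_succ] using hei⟩

/-- A graph is chordal if every cycle of length at least 4 has a chord, i.e.
an edge of the graph joining two vertices of the cycle which is not an edge of
the cycle (equivalently, joining two nonconsecutive vertices of the cycle). -/
def IsChordal {V : Type*} (G : SimpleGraph V) : Prop :=
  ∀ ⦃v : V⦄ (w : G.Walk v v), w.IsCycle → 4 ≤ w.length →
    ∃ a b, a ∈ w.support ∧ b ∈ w.support ∧ G.Adj a b ∧ s(a, b) ∉ w.edges

theorem clique_union_graph_chordal (m n k : ℕ) (hm : 2 ≤ m) (hn : 1 ≤ n)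
    (hk : k = n / 2 + 1) :
    IsChordal (SimpleGraph.fromRel fun a b : Fin n → ZMod m =>
      ((∀ i : ZMod m, i ≠ 0 →
          (Finset.univ.filter fun l => a l = i).card ≤ k ∧
          (Finset.univ.filter fun l => b l = i).card ≤ k) ∨
        ∃ j : ZMod m, j ≠ 0 ∧
          k - 1 ≤ (Finset.univ.filter fun l => a l = j).card ∧
          k - 1 ≤ (Finset.univ.filter fun l => b l = j).card)) := by
  classical
  set cnt : (Fin n → ZMod m) → ZMod m → ℕ :=
    fun a j => (Finset.univ.filter fun l => a l = j).card with hcnt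
  set inV : ZMod m → (Fin n → ZMod m) → Prop :=
    fun j a => if j = 0 then (∀ i : ZMod m, i ≠ 0 → cnt a i ≤ k) else k - 1 ≤ cnt a j
    with hinV
  -- counting lemmas
  have hcnt2 : ∀ (a : Fin n → ZMod m) (j j' : ZMod m), j ≠ j' →
      cnt a j + cnt a j' ≤ n := by
    intro a j j' hjj
    have hd : Disjoint (Finset.univ.filter fun l => a l = j)
        (Finset.univ.filter fun l => a l = j') := by
      rw [Finset.disjoint_left]
      intro l h1 h2
      simp only [Finset.mem_filter] at h1 h2
      exact hjj (h1.2 ▸ h2.2 ▸ rfl)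
    calc cnt a j + cnt a j'
        = ((Finset.univ.filter fun l => a l = j) ∪
           (Finset.univ.filter fun l => a l = j')).card :=
          (Finset.card_union_of_disjoint hd).symm
      _ ≤ (Finset.univ : Finset (Fin n)).card :=
          Finset.card_le_card (Finset.subset_univ _)
      _ = n := by simp
  have hcnt3 : ∀ (a : Fin n → ZMod m) (i j j' : ZMod m), i ≠ j → i ≠ j' → j ≠ j' →
      cnt a i + cnt a j + cnt a j' ≤ n := by
    intro a i j j' hij hij' hjj
    have hd1 : Disjoint (Finset.univ.filter fun l => a l = i)
        (Finset.univ.filter fun l => a l = j) := by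
      rw [Finset.disjoint_left]
      intro l h1 h2
      simp only [Finset.mem_filter] at h1 h2
      exact hij (h1.2 ▸ h2.2 ▸ rfl)
    have hd2 : Disjoint ((Finset.univ.filter fun l => a l = i) ∪
        (Finset.univ.filter fun l => a l = j))
        (Finset.univ.filter fun l => a l = j') := by
      rw [Finset.disjoint_left]
      intro l h1 h2
      simp only [Finset.mem_union, Finset.mem_filter] at h1 h2
      rcases h1 with h1 | h1
      · exact hij' (h1.2 ▸ h2.2 ▸ rfl)
      · exact hjj (h1.2 ▸ h2.2 ▸ rfl)
    calc cnt a i + cnt a j + cnt a j'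
        = ((Finset.univ.filter fun l => a l = i) ∪
           (Finset.univ.filter fun l => a l = j)).card +
          (Finset.univ.filter fun l => a l = j').card := by
          rw [Finset.card_union_of_disjoint hd1]
      _ = (((Finset.univ.filter fun l => a l = i) ∪
           (Finset.univ.filter fun l => a l = j)) ∪
           (Finset.univ.filter fun l => a l = j')).card :=
          (Finset.card_union_of_disjoint hd2).symm
      _ ≤ (Finset.univ : Finset (Fin n)).card :=
          Finset.card_le_card (Finset.subset_univ _)
      _ = n := by simp
  -- merging lemma: a vertex in two distinct cliques is in V₀
  have hmerge : ∀ (a : Fin n → ZMod m) (j j' : ZMod m), j ≠ j' →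
      inV j a → inV j' a → inV 0 a := by
    intro a j j' hjj hja hja'
    by_cases hj0 : j = 0
    · exact hj0 ▸ hja
    by_cases hj'0 : j' = 0
    · exact hj'0 ▸ hja'
    simp only [hinV, hj0, hj'0, if_false, if_pos rfl] at hja hja' ⊢
    intro i hi
    by_cases hij : i = j
    · subst hij
      have := hcnt2 a i j' hjj
      omega
    by_cases hij' : i = j'
    · subst hij'
      have := hcnt2 a i j (Ne.symm hjj)
      omega
    · have := hcnt3 a i j j' hij hij' hjj
      omega
  set G := (SimpleGraph.fromRel fun a b : Fin n → ZMod m =>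
      ((∀ i : ZMod m, i ≠ 0 →
          (Finset.univ.filter fun l => a l = i).card ≤ k ∧
          (Finset.univ.filter fun l => b l = i).card ≤ k) ∨
        ∃ j : ZMod m, j ≠ 0 ∧
          k - 1 ≤ (Finset.univ.filter fun l => a l = j).card ∧
          k - 1 ≤ (Finset.univ.filter fun l => b l = j).card)) with hG
  have hadj_common : ∀ {a b : Fin n → ZMod m}, G.Adj a b →
      ∃ j, inV j a ∧ inV j b := by
    intro a b hab
    rw [hG, SimpleGraph.fromRel_adj] at hab
    rcases hab.2 with h | h
    · rcases h with h | ⟨j, hj, h1, h2⟩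
      · exact ⟨0, by simp only [hinV, if_pos rfl]; exact fun i hi => (h i hi).1,
          by simp only [hinV, if_pos rfl]; exact fun i hi => (h i hi).2⟩
      · exact ⟨j, by simp only [hinV, if_neg hj]; exact h1,
          by simp only [hinV, if_neg hj]; exact h2⟩
    · rcases h with h | ⟨j, hj, h1, h2⟩
      · exact ⟨0, by simp only [hinV, if_pos rfl]; exact fun i hi => (h i hi).2,
          by simp only [hinV, if_pos rfl]; exact fun i hi => (h i hi).1⟩
      · exact ⟨j, by simp only [hinV, if_neg hj]; exact h2,
          by simp only [hinV, if_neg hj]; exact h1⟩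
  have hcommon_adj : ∀ {a b : Fin n → ZMod m}, a ≠ b →
      (∃ j, inV j a ∧ inV j b) → G.Adj a b := by
    rintro a b hne ⟨j, hja, hjb⟩
    rw [hG, SimpleGraph.fromRel_adj]
    refine ⟨hne, Or.inl ?_⟩
    by_cases hj0 : j = 0
    · subst hj0
      simp only [hinV, if_pos rfl] at hja hjb
      exact Or.inl fun i hi => ⟨hja i hi, hjb i hi⟩
    · simp only [hinV, if_neg hj0] at hja hjb
      exact Or.inr ⟨j, hj0, hja, hjb⟩
  intro v w hc hl
  set g : ℕ → (Fin n → ZMod m) := w.getVert with hg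
  have hadj : ∀ t : ℕ, t < w.length → ∃ j, inV j (g t) ∧ inV j (g (t + 1)) :=
    fun t ht => hadj_common (w.adj_getVert_succ ht)
  have key : ∃ i, i + 2 ≤ w.length ∧ ∃ j, inV j (g i) ∧ inV j (g (i + 2)) := by
    obtain ⟨j0, h0a, h0b⟩ := hadj 0 (by omega)
    obtain ⟨j1, h1a, h1b⟩ := hadj 1 (by omega)
    obtain ⟨j2, h2a, h2b⟩ := hadj 2 (by omega)
    obtain ⟨j3, h3a, h3b⟩ := hadj 3 (by omega)
    by_cases e01 : j0 = j1
    · exact ⟨0, by omega, j0, h0a, e01 ▸ h1b⟩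
    by_cases e12 : j1 = j2
    · exact ⟨1, by omega, j1, h1a, e12 ▸ h2b⟩
    by_cases e23 : j2 = j3
    · exact ⟨2, by omega, j2, h2a, e23 ▸ h3b⟩
    · exact ⟨1, by omega, 0, hmerge (g 1) j0 j1 e01 h0b h1a,
        hmerge (g 3) j2 j3 e23 h2b h3a⟩
  obtain ⟨i, hi2, j, hja, hjb⟩ := key
  have inj : ∀ p q : ℕ, p < q → q ≤ w.length → ¬(p = 0 ∧ q = w.length) →
      g p ≠ g q := fun p q h1 h2 h3 => chordal_aux_cycle_getVert_ne hc h1 h2 h3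
  have hne : g i ≠ g (i + 2) := inj i (i + 2) (by omega) hi2 (by omega)
  refine ⟨g i, g (i + 2),
    Walk.mem_support_iff_exists_getVert.mpr ⟨i, rfl, by omega⟩,
    Walk.mem_support_iff_exists_getVert.mpr ⟨i + 2, rfl, by omega⟩,
    hcommon_adj hne ⟨j, hja, hjb⟩, ?_⟩
  intro he
  obtain ⟨t, ht, het⟩ := chordal_aux_mem_edges_exists w he
  rw [Sym2.eq_iff] at het
  rcases het with ⟨hA1, hA2⟩ | ⟨hB1, hB2⟩
  · -- g i = g t, g (i+2) = g (t+1)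
    have hit : i = t := by
      rcases lt_trichotomy i t with h | h | h
      · exact absurd hA1 (inj i t h (by omega) (by omega))
      · exact h
      · exact absurd hA1.symm (inj t i h (by omega) (by omega))
    subst hit
    exact inj (i + 1) (i + 2) (by omega) (by omega) (by omega) hA2.symm
  · -- g i = g (t+1), g (i+2) = g t
    by_cases hwrap : i = 0 ∧ t + 1 = w.length
    · obtain ⟨hi0, htL⟩ := hwrap
      subst hi0
      exact inj 2 t (by omega) (by omega) (by omega) hB2
    · have hit : i = t + 1 := by
        rcases lt_trichotomy i (t + 1) with h | h | h
        · exact absurd hB1 (inj i (t + 1) h (by omega) (by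
            rintro ⟨h1, h2⟩; exact hwrap ⟨h1, h2⟩))
        · exact h
        · exact absurd hB1.symm (inj (t + 1) i h (by omega) (by omega))
      subst hit
      exact inj t (t + 3) (by omega) (by omega) (by omega) hB2.symm
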